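/- Fix m ≥ 2 and define the m-bonacci numbers by T_k = 2^k for 0 ≤ k ≤ m−1 and T_k = T_{k−1} + T_{k−2} + … + T_{k−m} for k ≥ m. Let t be the m-bonacci word (the fixed point of σ_m: i ↦ 0(i+1) for 0 ≤ i < m−1 and (m−1) ↦ 0), and let g = 0t. Then for each k with 0 ≤ k ≤ m−1, the set g|_k = {n : g_n = k} is an IP-set; specifically, every finite sum of distinct terms of the sequence (T_{mn+k})_{n ∈ ℕ} belongs to g|_k. -/

import Mathlib

/-- The set of occurrences of the finite word `u` in the infinite word `x`. -/
def Occ {A : Type*} (x : ℕ → A) (u : List A) : Set ℕ :=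
  {n | u = (List.range u.length).map fun i => x (n + i)}

/-- `u` is a prefix of the infinite word `x`. -/
def IsPref {A : Type*} (u : List A) (x : ℕ → A) : Prop :=
  u = (List.range u.length).map x

/-- `S` is an IP-set: it contains all finite sums of distinct terms of some
strictly increasing sequence of natural numbers. -/
def IPSet (S : Set ℕ) : Prop :=
  ∃ x : ℕ → ℕ, StrictMono x ∧
    ∀ F : Finset ℕ, F.Nonempty → (∑ n ∈ F, x n) ∈ S

/-- The m-bonacci substitution: i ↦ 0(i+1) for i < m−1 and (m−1) ↦ 0,
on the alphabet {0, 1, …, m−1} ⊆ ℕ. -/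
def sigmaM (m : ℕ) : ℕ → List ℕ := fun i => if i + 1 < m then [0, i + 1] else [0]

namespace S14

def sigl (m : ℕ) (u : List ℕ) : List ℕ := u.flatMap (sigmaM m)

def Wd (m j i : ℕ) : List ℕ := (sigl m)^[j] [i]

lemma sigl_append (m : ℕ) (u v : List ℕ) : sigl m (u ++ v) = sigl m u ++ sigl m v :=
  List.flatMap_append

lemma sigl_iter_append (m n : ℕ) (u v : List ℕ) :
    (sigl m)^[n] (u ++ v) = (sigl m)^[n] u ++ (sigl m)^[n] v := by
  induction n generalizing u v with
  | zero => rfl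
  | succ n ih => simp only [Function.iterate_succ_apply, sigl_append, ih]

lemma Wd_zero (m i : ℕ) : Wd m 0 i = [i] := rfl

lemma Wd_succ' (m j i : ℕ) : Wd m (j + 1) i = sigl m (Wd m j i) :=
  Function.iterate_succ_apply' _ _ _

lemma sigl_singleton (m i : ℕ) : sigl m [i] = sigmaM m i := by
  simp [sigl]

lemma Wd_succ_lt (m j i : ℕ) (h : i + 1 < m) :
    Wd m (j + 1) i = Wd m j 0 ++ Wd m j (i + 1) := by
  have : Wd m (j + 1) i = (sigl m)^[j] (sigmaM m i) := by
    rw [Wd, Function.iterate_succ_apply, sigl_singleton]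
  rw [this, sigmaM, if_pos h, show ([0, i+1] : List ℕ) = [0] ++ [i+1] from rfl,
    sigl_iter_append]
  rfl

lemma Wd_succ_ge (m j i : ℕ) (h : ¬ i + 1 < m) : Wd m (j + 1) i = Wd m j 0 := by
  have : Wd m (j + 1) i = (sigl m)^[j] (sigmaM m i) := by
    rw [Wd, Function.iterate_succ_apply, sigl_singleton]
  rw [this, sigmaM, if_neg h]
  rfl

lemma Wd_ne_nil (m : ℕ) : ∀ j i, Wd m j i ≠ [] := by
  intro j
  induction j with
  | zero => intro i; exact List.cons_ne_nil _ _
  | succ j ih =>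
    intro i
    by_cases h : i + 1 < m
    · rw [Wd_succ_lt m j i h]
      exact List.append_ne_nil_of_left_ne_nil (ih 0) _
    · rw [Wd_succ_ge m j i h]; exact ih 0

end S14
namespace S14

lemma Wd_congr (m : ℕ) {a b : ℕ} (h : a = b) : Wd m a 0 = Wd m b 0 := by rw [h]

lemma Wd_one_dec (m : ℕ) : ∀ d, 1 ≤ d → ∀ j i, i + d = m → 1 ≤ i → d ≤ j →
    Wd m j i = ((List.range d).map (fun s => Wd m (j - 1 - s) 0)).flatten := by
  intro d
  induction d with
  | zero => omega
  | succ d ih =>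
    intro _ j i him hi hdj
    rcases Nat.exists_eq_add_of_le hdj with ⟨j', rfl⟩
    rcases Nat.eq_zero_or_pos d with rfl | hd
    · have h1 : ¬ i + 1 < m := by omega
      have h2 : 0 + 1 + j' = j' + 1 := by omega
      rw [h2, Wd_succ_ge m j' i h1]
      have h3 : List.range (0 + 1) = [0] := by simp [List.range_succ]
      rw [h3]
      simp only [List.map_cons, List.map_nil, List.flatten_cons,
        List.flatten_nil, List.append_nil]
      exact Wd_congr m (by omega)
    · have h1 : i + 1 < m := by omega
      have h2 : d + 1 + j' = (d + j') + 1 := by omega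
      rw [h2, Wd_succ_lt m (d + j') i h1,
        ih hd (d + j') (i + 1) (by omega) (by omega) (by omega)]
      rw [List.range_succ_eq_map]
      simp only [List.map_cons, List.map_map, List.flatten_cons]
      have eA : Wd m (d + j' + 1 - 1 - 0) 0 = Wd m (d + j') 0 := Wd_congr m (by omega)
      have eB : List.map ((fun s => Wd m (d + j' + 1 - 1 - s) 0) ∘ Nat.succ) (List.range d)
          = List.map (fun s => Wd m (d + j' - 1 - s) 0) (List.range d) := by
        apply List.map_congr_left
        intro s _
        simp only [Function.comp_apply]
        exact Wd_congr m (by omega)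
      rw [eA, eB]

lemma Wd_zero_dec (m : ℕ) (hm : 2 ≤ m) (j : ℕ) (hj : m ≤ j) :
    Wd m j 0 = ((List.range m).map (fun s => Wd m (j - 1 - s) 0)).flatten := by
  obtain ⟨j', rfl⟩ : ∃ j', j = j' + 1 := ⟨j - 1, by omega⟩
  rw [Wd_succ_lt m j' 0 (by omega),
    Wd_one_dec m (m - 1) (by omega) j' 1 (by omega) le_rfl (by omega)]
  have hr : List.range m = 0 :: List.map Nat.succ (List.range (m - 1)) := by
    rw [← List.range_succ_eq_map]
    congr 1
    omega
  rw [hr]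
  simp only [List.map_cons, List.map_map, List.flatten_cons]
  have eA : Wd m (j' + 1 - 1 - 0) 0 = Wd m j' 0 := Wd_congr m (by omega)
  have eB : List.map ((fun s => Wd m (j' + 1 - 1 - s) 0) ∘ Nat.succ) (List.range (m - 1))
      = List.map (fun s => Wd m (j' - 1 - s) 0) (List.range (m - 1)) := by
    apply List.map_congr_left
    intro s _
    simp only [Function.comp_apply]
    exact Wd_congr m (by omega)
  rw [eA, eB]

lemma list_sum_range (f : ℕ → ℕ) (n : ℕ) :
    ((List.range n).map f).sum = ∑ i ∈ Finset.range n, f i := by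
  induction n with
  | zero => simp
  | succ n ih => rw [List.range_succ, Finset.sum_range_succ]; simp [ih]

lemma len_small (m : ℕ) : ∀ j i, i + j < m → (Wd m j i).length = 2 ^ j := by
  intro j
  induction j with
  | zero => intro i _; rfl
  | succ j ih =>
    intro i hij
    rw [Wd_succ_lt m j i (by omega), List.length_append, ih 0 (by omega),
      ih (i+1) (by omega), pow_succ]
    omega

lemma len_T (m : ℕ) (hm : 2 ≤ m) (T : ℕ → ℕ) (hT1 : ∀ k < m, T k = 2 ^ k)
    (hT2 : ∀ k, m ≤ k → T k = ∑ i ∈ Finset.range m, T (k - 1 - i)) :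
    ∀ j, (Wd m j 0).length = T j := by
  intro j
  induction j using Nat.strong_induction_on with
  | _ j ih =>
    by_cases hj : j < m
    · rw [len_small m j 0 (by omega), hT1 j hj]
    · push_neg at hj
      rw [Wd_zero_dec m hm j hj, List.length_flatten, List.map_map, hT2 j hj]
      rw [show (List.length ∘ fun s => Wd m (j - 1 - s) 0) = fun s => (Wd m (j-1-s) 0).length from rfl]
      rw [list_sum_range]
      apply Finset.sum_congr rfl
      intro s hs
      exact ih (j - 1 - s) (by omega)

lemma T_pos (m : ℕ) (hm : 2 ≤ m) (T : ℕ → ℕ) (hT1 : ∀ k < m, T k = 2 ^ k)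
    (hT2 : ∀ k, m ≤ k → T k = ∑ i ∈ Finset.range m, T (k - 1 - i)) (j : ℕ) : 1 ≤ T j := by
  rw [← len_T m hm T hT1 hT2 j]
  exact List.length_pos_iff.mpr (Wd_ne_nil m j 0)

lemma last_small (m : ℕ) : ∀ j i, i + j < m → (Wd m j i).getLast? = some (i + j) := by
  intro j
  induction j with
  | zero => intro i _; rfl
  | succ j ih =>
    intro i hij
    rw [Wd_succ_lt m j i (by omega), List.getLast?_append]
    rw [ih (i+1) (by omega)]
    simp only [Option.some_or]
    congr 1
    omega

lemma last_T (m : ℕ) (hm : 2 ≤ m) : ∀ j, (Wd m j 0).getLast? = some (j % m) := by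
  intro j
  induction j using Nat.strong_induction_on with
  | _ j ih =>
    by_cases hj : j < m
    · rw [last_small m j 0 (by omega)]
      rw [Nat.mod_eq_of_lt hj, Nat.zero_add]
    · push_neg at hj
      rw [Wd_zero_dec m hm j hj]
      have hm' : m = (m - 1) + 1 := by omega
      rw [hm', List.range_succ, ← hm']
      simp only [List.map_append, List.map_cons, List.map_nil, List.flatten_append,
        List.flatten_cons, List.flatten_nil, List.append_nil]
      rw [List.getLast?_append]
      have h1 : j - 1 - (m - 1) = j - m := by omega
      rw [h1, ih (j - m) (by omega)]
      have h2 : (j - m) % m = j % m := (Nat.mod_eq_sub_mod hj).symm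
      rw [h2]
      rfl

end S14
namespace S14

lemma pref_nil (t : ℕ → ℕ) : IsPref ([] : List ℕ) t := by
  simp [IsPref]

lemma pref_take (t : ℕ → ℕ) (u : List ℕ) (n : ℕ) (hu : IsPref u t) :
    IsPref (u.take n) t := by
  rw [IsPref] at hu ⊢
  conv_lhs => rw [hu]
  rw [← List.map_take, List.take_range, List.length_take, hu, List.length_map,
    List.length_range]

lemma pref_sigl (m : ℕ) (t : ℕ → ℕ)
    (hfix : ∀ n : ℕ, IsPref (((List.range n).map t).flatMap (sigmaM m)) t)
    (u : List ℕ) (hu : IsPref u t) : IsPref (sigl m u) t := by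
  have := hfix u.length
  rw [IsPref] at hu
  rw [sigl, hu]
  exact this

lemma sigmaM_head (m a : ℕ) : ∃ s, sigmaM m a = 0 :: s := by
  rw [sigmaM]
  split
  · exact ⟨[a+1], rfl⟩
  · exact ⟨[], rfl⟩

lemma pref_sigl_zero (m : ℕ) (t : ℕ → ℕ)
    (hfix : ∀ n : ℕ, IsPref (((List.range n).map t).flatMap (sigmaM m)) t)
    (u : List ℕ) (hu : IsPref u t) : IsPref (sigl m u ++ [0]) t := by
  have h1 := hfix (u.length + 1)
  rw [List.range_succ, List.map_append, List.flatMap_append] at h1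
  rw [IsPref] at hu
  rw [← hu] at h1
  obtain ⟨s, hs⟩ := sigmaM_head m (t u.length)
  have h2 : ((List.map t [u.length]).flatMap (sigmaM m)) = 0 :: s := by
    simp [hs]
  rw [h2] at h1
  have h3 : sigl m u ++ [0] = (u.flatMap (sigmaM m) ++ (0 :: s)).take ((u.flatMap (sigmaM m)).length + 1) := by
    rw [List.take_append, List.take_of_length_le (by omega),
      show (u.flatMap (sigmaM m)).length + 1 - (u.flatMap (sigmaM m)).length = 1 by omega]
    rfl
  rw [h3]
  exact pref_take t _ _ h1

end S14
namespace S14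

lemma chain_ge_last (m : ℕ) : ∀ (l : List ℕ) (b : ℕ),
    List.IsChain (fun a c => c + m ≤ a) l → l.getLast? = some b → ∀ a ∈ l, b ≤ a := by
  intro l
  induction l with
  | nil => intro b _ h; simp at h
  | cons x l ih =>
    intro b hc hl a ha
    cases l with
    | nil =>
      simp only [List.getLast?_singleton, Option.some.injEq] at hl
      simp only [List.mem_singleton] at ha
      omega
    | cons y r =>
      rw [List.isChain_cons_cons] at hc
      rw [List.getLast?_cons_cons] at hl
      rcases List.mem_cons.mp ha with rfl | ha'
      · have hy := ih b hc.2 hl y List.mem_cons_self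
        have := hc.1
        omega
      · exact ih b hc.2 hl a ha'

lemma chain_dropLast (m : ℕ) : ∀ (l : List ℕ) (b : ℕ),
    List.IsChain (fun a c => c + m ≤ a) l → l.getLast? = some b →
    ∀ a ∈ l.dropLast, b + m ≤ a := by
  intro l
  induction l with
  | nil => simp
  | cons x l ih =>
    intro b hc hl a ha
    cases l with
    | nil => simp at ha
    | cons y r =>
      rw [List.isChain_cons_cons] at hc
      rw [List.getLast?_cons_cons] at hl
      rw [List.dropLast_cons₂] at ha
      rcases List.mem_cons.mp ha with rfl | ha'
      · have hy := chain_ge_last m (y :: r) b hc.2 hl y List.mem_cons_self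
        have := hc.1
        omega
      · exact ih b hc.2 hl a ha'

lemma chain_map_pred (m : ℕ) : ∀ (l : List ℕ), List.IsChain (fun a c => c + m ≤ a) l →
    (∀ a ∈ l, 1 ≤ a) → List.IsChain (fun a c => c + m ≤ a) (l.map (fun x => x - 1)) := by
  intro l
  induction l with
  | nil => simp
  | cons x l ih =>
    intro hc h1
    cases l with
    | nil => exact List.isChain_singleton _
    | cons y r =>
      rw [List.isChain_cons_cons] at hc
      simp only [List.map_cons] at *
      rw [List.isChain_cons_cons]
      refine ⟨?_, ?_⟩
      · have hy : 1 ≤ y := h1 y (by simp)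
        have := hc.1
        omega
      · have := ih hc.2 (fun a ha => h1 a (List.mem_cons_of_mem _ ha))
        simpa using this

lemma sum_map_pred : ∀ (l : List ℕ), (∀ a ∈ l, 1 ≤ a) →
    (l.map (fun x => x - 1)).sum + l.length = l.sum := by
  intro l
  induction l with
  | nil => simp
  | cons x l ih =>
    intro h1
    simp only [List.map_cons, List.sum_cons, List.length_cons]
    have hx : 1 ≤ x := h1 x (by simp)
    have := ih (fun a ha => h1 a (List.mem_cons_of_mem _ ha))
    omega

lemma Wl_map_succ (m : ℕ) (l : List ℕ) :
    (l.map (fun x => x + 1)).flatMap (fun j => Wd m j 0)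
      = sigl m (l.flatMap (fun j => Wd m j 0)) := by
  induction l with
  | nil => simp [sigl]
  | cons x l ih =>
    simp only [List.map_cons, List.flatMap_cons, sigl_append, ih, Wd_succ']

lemma map_pred_succ (l : List ℕ) (h1 : ∀ a ∈ l, 1 ≤ a) :
    (l.map (fun x => x - 1)).map (fun x => x + 1) = l := by
  rw [List.map_map]
  have : ∀ a ∈ l, ((fun x => x + 1) ∘ fun x => x - 1) a = id a := by
    intro a ha
    have := h1 a ha
    simp only [Function.comp_apply, id]
    omega
  rw [List.map_congr_left this, List.map_id]

lemma pref_main (m : ℕ) (hm : 1 ≤ m) (t : ℕ → ℕ)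
    (hfix : ∀ n : ℕ, IsPref (((List.range n).map t).flatMap (sigmaM m)) t) :
    ∀ N (l : List ℕ), l.sum + l.length ≤ N →
      List.IsChain (fun a c => c + m ≤ a) l →
      IsPref (l.flatMap (fun j => Wd m j 0)) t := by
  intro N
  induction N with
  | zero =>
    intro l h _
    cases l with
    | nil => exact pref_nil t
    | cons x r => simp at h
  | succ N ih =>
    intro l hN hc
    cases hl : l with
    | nil => exact pref_nil t
    | cons x r =>
    rw [← hl]
    have hne : l ≠ [] := by rw [hl]; exact List.cons_ne_nil _ _
    have hlen : 1 ≤ l.length := List.length_pos_iff.mpr hne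
    set b := l.getLast hne with hbdef
    have hb : l.getLast? = some b := List.getLast?_eq_getLast hne
    by_cases hb1 : 1 ≤ b
    · have h1 : ∀ a ∈ l, 1 ≤ a := fun a ha =>
        le_trans hb1 (chain_ge_last m l b hc hb a ha)
      rw [← map_pred_succ l h1, Wl_map_succ]
      apply pref_sigl m t hfix
      refine ih (l.map (fun x => x - 1)) ?_ (chain_map_pred m l hc h1)
      have hs := sum_map_pred l h1
      rw [List.length_map]
      omega
    · have hb0 : b = 0 := by omega
      have hsplit : l = l.dropLast ++ [0] := by
        conv_lhs => rw [← List.dropLast_append_getLast hne]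
        rw [← hbdef, hb0]
      have h1 : ∀ a ∈ l.dropLast, 1 ≤ a := fun a ha => by
        have h2 := chain_dropLast m l b hc hb a ha
        omega
      rw [hsplit, List.flatMap_append]
      have hz : ([0] : List ℕ).flatMap (fun j => Wd m j 0) = [0] := by
        simp [Wd_zero]
      rw [hz, ← map_pred_succ l.dropLast h1, Wl_map_succ]
      apply pref_sigl_zero m t hfix
      refine ih (l.dropLast.map (fun x => x - 1)) ?_ (chain_map_pred m l.dropLast hc.dropLast h1)
      have hs := sum_map_pred l.dropLast h1
      have hsum : l.sum = l.dropLast.sum := by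
        conv_lhs => rw [hsplit]
        simp
      have hlen2 : l.length = l.dropLast.length + 1 := by
        conv_lhs => rw [hsplit]
        simp
      rw [List.length_map]
      omega

end S14
namespace S14

lemma T_strict (m : ℕ) (hm : 2 ≤ m) (T : ℕ → ℕ) (hT1 : ∀ k < m, T k = 2 ^ k)
    (hT2 : ∀ k, m ≤ k → T k = ∑ i ∈ Finset.range m, T (k - 1 - i)) :
    ∀ j, T j < T (j + 1) := by
  intro j
  by_cases h : j + 1 < m
  · rw [hT1 j (by omega), hT1 (j + 1) h]
    exact Nat.pow_lt_pow_succ (by norm_num)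
  · rw [hT2 (j + 1) (by omega)]
    have h0 : 0 ∈ Finset.range m := by simp; omega
    have e1 := Finset.add_sum_erase (Finset.range m) (fun i => T (j + 1 - 1 - i)) h0
    have h1 : 1 ∈ (Finset.range m).erase 0 := by
      simp only [Finset.mem_erase, Finset.mem_range]
      omega
    have e2 := Finset.single_le_sum (f := fun i => T (j + 1 - 1 - i))
      (fun i _ => Nat.zero_le _) h1
    have e3 : T (j + 1 - 1 - 0) = T j := by congr 1
    have e4 : T (j + 1 - 1 - 1) ≥ 1 := by
      have := T_pos m hm T hT1 hT2 (j + 1 - 1 - 1)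
      omega
    omega

lemma getLast_flatMap (m : ℕ) : ∀ (l : List ℕ) (b : ℕ), l.getLast? = some b →
    (l.flatMap (fun j => Wd m j 0)).getLast? = (Wd m b 0).getLast? := by
  intro l
  induction l with
  | nil => intro b h; simp at h
  | cons x r ih =>
    intro b h
    cases r with
    | nil =>
      simp only [List.getLast?_singleton, Option.some.injEq] at h
      subst h
      simp [List.flatMap_cons]
    | cons y s =>
      rw [List.getLast?_cons_cons] at h
      rw [List.flatMap_cons, List.getLast?_append, ih b h]
      rw [List.getLast?_eq_getLast (Wd_ne_nil m b 0)]
      exact Option.some_or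

end S14

theorem stmt_14 (m : ℕ) (hm : 2 ≤ m)
    (t : ℕ → ℕ) (ht0 : t 0 = 0)
    (hfix : ∀ n : ℕ, IsPref (((List.range n).map t).flatMap (sigmaM m)) t)
    (T : ℕ → ℕ) (hT1 : ∀ k < m, T k = 2 ^ k)
    (hT2 : ∀ k, m ≤ k → T k = ∑ i ∈ Finset.range m, T (k - 1 - i))
    (g : ℕ → ℕ) (hg0 : g 0 = 0) (hg : ∀ n, g (n + 1) = t n) :
    ∀ k < m,
      (∀ A : Finset ℕ, A.Nonempty → g (∑ n ∈ A, T (m * n + k)) = k) ∧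
        IPSet {n | g n = k} := by
  intro k hk
  have key : ∀ A : Finset ℕ, A.Nonempty → g (∑ n ∈ A, T (m * n + k)) = k := by
    intro A hA
    set ls := Finset.sort A (· ≥ ·) with hls
    set l := ls.map (fun n => m * n + k) with hldef
    have hls_ne : ls ≠ [] := by
      have h1 : ls.length = A.card := Finset.length_sort _
      have h2 : 0 < A.card := Finset.card_pos.mpr hA
      intro h
      rw [h] at h1
      simp at h1
      omega
    have hl_ne : l ≠ [] := by
      rw [hldef]
      simp [hls_ne]
    have hchain : List.IsChain (fun a c => c + m ≤ a) l := by
      rw [hldef, List.isChain_map]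
      have hs : List.IsChain (· > ·) ls := List.Pairwise.isChain (Finset.sortedGT_sort A).pairwise
      apply hs.imp
      intro a b hab
      have h1 : b + 1 ≤ a := hab
      have h2 : m * (b + 1) ≤ m * a := Nat.mul_le_mul le_rfl h1
      rw [Nat.mul_succ] at h2
      omega
    have hpref := S14.pref_main m (by omega) t hfix (l.sum + l.length) l le_rfl hchain
    set W := l.flatMap (fun j => S14.Wd m j 0) with hW
    have hlen : W.length = ∑ n ∈ A, T (m * n + k) := by
      rw [hW, List.length_flatMap, hldef, List.map_map]
      have he : ((fun a => (S14.Wd m a 0).length) ∘ fun n => m * n + k)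
          = fun n => T (m * n + k) := by
        funext n
        simp [S14.len_T m hm T hT1 hT2]
      rw [he, ← Finset.sum_map_toList]
      exact List.Perm.sum_eq (List.Perm.map _ (Finset.sort_perm_toList _ _))
    have hNpos : 1 ≤ ∑ n ∈ A, T (m * n + k) := by
      obtain ⟨a, ha⟩ := hA
      calc 1 ≤ T (m * a + k) := S14.T_pos m hm T hT1 hT2 _
        _ ≤ ∑ n ∈ A, T (m * n + k) :=
          Finset.single_le_sum (f := fun n => T (m * n + k)) (fun i _ => Nat.zero_le _) ha
    obtain ⟨bl, hbl⟩ : ∃ bl, ls.getLast? = some bl :=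
      ⟨ls.getLast hls_ne, List.getLast?_eq_getLast _⟩
    have hlast_l : l.getLast? = some (m * bl + k) := by
      rw [hldef, List.getLast?_map, hbl]
      rfl
    have hW_last : W.getLast? = some ((m * bl + k) % m) := by
      rw [hW, S14.getLast_flatMap m l _ hlast_l, S14.last_T m hm]
    have hmod : (m * bl + k) % m = k := by
      rw [Nat.mul_comm, Nat.add_comm, Nat.add_mul_mod_self_right, Nat.mod_eq_of_lt hk]
    set N := ∑ n ∈ A, T (m * n + k) with hN
    have hpref2 : W = (List.range N).map t := by
      rw [← hlen]
      exact hpref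
    have hrange : List.range N = List.range (N - 1) ++ [N - 1] := by
      conv_lhs => rw [show N = (N - 1) + 1 by omega]
      rw [List.range_succ]
    have hWl2 : W.getLast? = some (t (N - 1)) := by
      rw [hpref2, hrange, List.map_append]
      simp
    have htN : t (N - 1) = k := by
      rw [hWl2, hmod] at hW_last
      exact Option.some.inj hW_last
    have hgN : g N = t (N - 1) := by
      conv_lhs => rw [show N = (N - 1) + 1 by omega]
      exact hg (N - 1)
    rw [hgN, htN]
  refine ⟨key, ⟨fun n => T (m * n + k), ?_, fun F hF => key F hF⟩⟩
  have hT_mono : StrictMono T :=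
    strictMono_nat_of_lt_succ (S14.T_strict m hm T hT1 hT2)
  apply strictMono_nat_of_lt_succ
  intro n
  apply hT_mono
  rw [Nat.mul_succ]
  omega
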